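/- Let G be a finite simple graph on n vertices and G' the graph obtained from G by adding a vertex x adjacent to all of V(G), vertices x₁,…,x_{n+3} each adjacent to x, and a vertex y adjacent to each xᵢ. If S is a minimal feedback vertex set of G' with |S| ≥ k + n + 2, then x ∉ S and y ∉ S, |S ∩ {x₁,…,x_{n+3}}| = n + 2, and S ∩ V(G) is a minimal vertex cover of G of size at least k. -/

import Mathlib

open SimpleGraph

def IsFVS {V : Type*} (G : SimpleGraph V) (S : Set V) : Prop :=
  (G.induce (Sᶜ : Set V)).IsAcyclic

def IsMinFVS {V : Type*} (G : SimpleGraph V) (S : Set V) : Prop :=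
  IsFVS G S ∧ ∀ T : Set V, T ⊂ S → ¬ IsFVS G T

def IsVertexCover {V : Type*} (G : SimpleGraph V) (C : Set V) : Prop :=
  ∀ ⦃u w : V⦄, G.Adj u w → u ∈ C ∨ w ∈ C

def IsMinVertexCover {V : Type*} (G : SimpleGraph V) (C : Set V) : Prop :=
  _root_.IsVertexCover G C ∧ ∀ T : Set V, T ⊂ C → ¬ _root_.IsVertexCover G T

/-- Relation for the extended graph `G'` (see paper): `Sum.inr false = x`,
`Sum.inr true = y`, `Sum.inl (Sum.inl v)` are vertices of `G`, and
`Sum.inl (Sum.inr i)` are the new vertices `x₁,…,x_{n+3}`. -/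
def extRel {V : Type*} [Fintype V] (G : SimpleGraph V) :
    (V ⊕ Fin (Fintype.card V + 3)) ⊕ Bool →
    (V ⊕ Fin (Fintype.card V + 3)) ⊕ Bool → Prop :=
  fun a b =>
    match a, b with
    | .inl (.inl v), .inl (.inl w) => G.Adj v w
    | .inr false, .inl _ => True
    | .inr true, .inl (.inr _) => True
    | _, _ => False

def Gext {V : Type*} [Fintype V] (G : SimpleGraph V) :
    SimpleGraph ((V ⊕ Fin (Fintype.card V + 3)) ⊕ Bool) :=
  SimpleGraph.fromRel (extRel G)

/-! ### Auxiliary lemmas -/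

section Aux

variable {W : Type*} {H : SimpleGraph W}

lemma aux_mem_tail_of_closed {v x : W} {c : H.Walk v v} (hc : ¬ c.Nil) :
    x ∈ c.support ↔ x ∈ c.support.tail := by
  obtain ⟨u, h, q, rfl⟩ := SimpleGraph.Walk.not_nil_iff.mp hc
  simp only [Walk.support_cons, List.tail_cons, List.mem_cons]
  constructor
  · rintro (rfl | h); · exact q.end_mem_support
    · exact h
  · exact Or.inr

/-- In a cycle, every vertex of the support has two distinct neighbours on the support. -/
lemma aux_exists_two_neighbors {v w : W} {p : H.Walk v v} (hp : p.IsCycle)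
    (hw : w ∈ p.support) :
    ∃ u₁ u₂, u₁ ≠ u₂ ∧ u₁ ∈ p.support ∧ u₂ ∈ p.support ∧ H.Adj w u₁ ∧ H.Adj w u₂ := by
  haveI := Classical.decEq W
  set q := p.rotate w hw with hqdef
  have hq : q.IsCycle := hp.rotate hw
  have hmem : ∀ x, x ∈ q.support ↔ x ∈ p.support := by
    intro x
    rw [aux_mem_tail_of_closed hq.not_nil, aux_mem_tail_of_closed hp.not_nil,
      (Walk.support_rotate p w hw).mem_iff]
  obtain ⟨u₁, h₁, q', hq'⟩ := Walk.not_nil_iff.mp hq.not_nil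
  have hrnil : ¬ q.reverse.Nil := by
    rw [Walk.not_nil_iff_lt_length, Walk.length_reverse]
    exact lt_of_lt_of_le (by norm_num) hq.three_le_length
  obtain ⟨u₂, h₂, r, hr⟩ := Walk.not_nil_iff.mp hrnil
  refine ⟨u₁, u₂, ?_, ?_, ?_, h₁, h₂⟩
  · intro heq
    subst heq
    have hnodup : q.edges.Nodup := hq.isCircuit.isTrail.edges_nodup
    have he1 : q.edges = s(w, u₁) :: q'.edges := by rw [hq']; rfl
    have he2 : q.edges = r.edges.reverse ++ [s(w, u₁)] := by
      conv_lhs => rw [← q.reverse_reverse, hr]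
      rw [Walk.edges_reverse, Walk.edges_cons, List.reverse_cons]
    have hlen : 3 ≤ q'.edges.length + 1 := by
      have h3 := hq.three_le_length
      rw [hq'] at h3
      simpa [Walk.length_edges] using h3
    rw [he1] at he2 hnodup
    rcases hre : r.edges.reverse with _ | ⟨e, t⟩
    · rw [hre, List.nil_append] at he2
      have : q'.edges = [] := by simpa using he2
      rw [this] at hlen
      simp at hlen
    · rw [hre, List.cons_append] at he2
      injection he2 with hhead htail
      have hm : s(w, u₁) ∈ q'.edges := by rw [htail]; simp
      exact (List.nodup_cons.mp hnodup).1 hm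
  · refine (hmem _).mp ?_
    rw [hq']
    simp [Walk.support_cons]
  · refine (hmem _).mp ?_
    have : u₂ ∈ q.reverse.support := by rw [hr]; simp [Walk.support_cons]
    rwa [Walk.support_reverse, List.mem_reverse] at this

def auxInclHom (H : SimpleGraph W) (s : Set W) : H.induce s →g H :=
  ⟨fun a => a.1, fun h => by simpa using h⟩

lemma aux_walk_lift {s : Set W} : ∀ {a b : W} (p : H.Walk a b)
    (_ : ∀ w ∈ p.support, w ∈ s) (ha : a ∈ s) (hb : b ∈ s),
    ∃ q : (H.induce s).Walk ⟨a, ha⟩ ⟨b, hb⟩, q.map (auxInclHom H s) = p := by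
  intro a b p
  induction p with
  | nil => intro hp ha hb; exact ⟨.nil, rfl⟩
  | @cons a c b h p ih =>
      intro hp ha hb
      have hc : c ∈ s := hp c (by simp [Walk.support_cons])
      obtain ⟨q, hq⟩ := ih (fun w hw => hp w (by simp [Walk.support_cons, hw])) hc hb
      exact ⟨.cons (by simpa using h : (H.induce s).Adj ⟨a, ha⟩ ⟨c, hc⟩) q,
        by simp only [Walk.map_cons]; exact congrArg _ hq⟩

/-- `S` is a feedback vertex set iff every cycle meets `S`. -/
lemma aux_isFVS_iff (H : SimpleGraph W) (S : Set W) :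
    IsFVS H S ↔ ∀ ⦃v : W⦄ (p : H.Walk v v), p.IsCycle → ∃ w ∈ p.support, w ∈ S := by
  constructor
  · intro hfvs v p hp
    by_contra hno
    push_neg at hno
    have hmem : ∀ w ∈ p.support, w ∈ (Sᶜ : Set W) := fun w hw => hno w hw
    obtain ⟨q, hq⟩ := aux_walk_lift p hmem (hmem v p.start_mem_support)
      (hmem v p.start_mem_support)
    rw [← hq] at hp
    exact hfvs q ((Walk.map_isCycle_iff_of_injective Subtype.val_injective).mp hp)
  · intro h v c hc
    have hc' := (Walk.map_isCycle_iff_of_injective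
      (f := auxInclHom H Sᶜ) Subtype.val_injective).mpr hc
    obtain ⟨w, hw, hwS⟩ := h _ hc'
    rw [Walk.support_map] at hw
    obtain ⟨w', hw', rfl⟩ := List.mem_map.mp hw
    exact w'.2 hwS

lemma aux_triangle_isCycle {a b c : W} (hab : H.Adj a b) (hbc : H.Adj b c)
    (hca : H.Adj c a) :
    ((Walk.cons hab) ((Walk.cons hbc) (Walk.cons hca .nil))).IsCycle := by
  have h1 := hab.ne
  have h2 := hbc.ne
  have h3 := hca.ne
  simp [Walk.isCycle_def, Walk.isTrail_def, Sym2.eq_iff, Walk.support_cons]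
  aesop

lemma aux_square_isCycle {a b c d : W} (hab : H.Adj a b) (hbc : H.Adj b c)
    (hcd : H.Adj c d) (hda : H.Adj d a) (hac : a ≠ c) (hbd : b ≠ d) :
    ((Walk.cons hab) ((Walk.cons hbc) ((Walk.cons hcd) (Walk.cons hda .nil)))).IsCycle := by
  have h1 := hab.ne
  have h2 := hbc.ne
  have h3 := hcd.ne
  have h4 := hda.ne
  simp [Walk.isCycle_def, Walk.isTrail_def, Sym2.eq_iff, Walk.support_cons]
  aesop

end Aux

section GextAux

variable {V : Type*} [Fintype V] {G : SimpleGraph V}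

lemma gext_adj_X_inl (z : V ⊕ Fin (Fintype.card V + 3)) :
    (Gext G).Adj (.inr false) (.inl z) := by
  simp [Gext, SimpleGraph.fromRel_adj, extRel]

lemma gext_adj_Y_B (i : Fin (Fintype.card V + 3)) :
    (Gext G).Adj (.inr true) (.inl (.inr i)) := by
  simp [Gext, SimpleGraph.fromRel_adj, extRel]

lemma gext_adj_A_A {u w : V} (h : G.Adj u w) :
    (Gext G).Adj (.inl (.inl u)) (.inl (.inl w)) := by
  simp only [Gext, SimpleGraph.fromRel_adj, extRel]
  exact ⟨by simp [h.ne], Or.inl h⟩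

lemma gext_nbr_B {z} {i : Fin (Fintype.card V + 3)}
    (h : (Gext G).Adj (.inl (.inr i)) z) : z = .inr false ∨ z = .inr true := by
  rcases z with (v | j) | (_ | _) <;>
    simp_all [Gext, SimpleGraph.fromRel_adj, extRel]

lemma gext_nbr_Y {z} (h : (Gext G).Adj (.inr true) z) :
    ∃ i : Fin (Fintype.card V + 3), z = .inl (.inr i) := by
  rcases z with (v | j) | (_ | _) <;>
    simp_all [Gext, SimpleGraph.fromRel_adj, extRel]

lemma gext_nbr_A {z} {v : V} (h : (Gext G).Adj (.inl (.inl v)) z) :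
    z = .inr false ∨ ∃ w, z = .inl (.inl w) ∧ G.Adj v w := by
  rcases z with (w | j) | (_ | _) <;>
    simp_all [Gext, SimpleGraph.fromRel_adj, extRel]
  exact h.2.elim id fun hx => hx.symm

end GextAux

/-- If `S` is a minimal feedback vertex set of `G'` with `|S| ≥ k + n + 2`,
then `x ∉ S`, `y ∉ S`, `S` contains exactly `n + 2` of the vertices
`x₁,…,x_{n+3}`, and `S ∩ V(G)` is a minimal vertex cover of `G` of size at
least `k`. -/
theorem minimal_vc_of_minimal_fvs {V : Type*} [Fintype V] (G : SimpleGraph V)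
    (k : ℕ) (hk : 0 < k)
    (S : Set ((V ⊕ Fin (Fintype.card V + 3)) ⊕ Bool))
    (hS : IsMinFVS (Gext G) S)
    (hsize : k + Fintype.card V + 2 ≤ S.ncard) :
    (Sum.inr false : (V ⊕ Fin (Fintype.card V + 3)) ⊕ Bool) ∉ S ∧
    (Sum.inr true : (V ⊕ Fin (Fintype.card V + 3)) ⊕ Bool) ∉ S ∧
    (S ∩ {z | ∃ i : Fin (Fintype.card V + 3), z = Sum.inl (Sum.inr i)}).ncard =
      Fintype.card V + 2 ∧
    IsMinVertexCover G {v : V | Sum.inl (Sum.inl v) ∈ S} ∧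
    k ≤ {v : V | Sum.inl (Sum.inl v) ∈ S}.ncard := by
  classical
  set RA : Set ((V ⊕ Fin (Fintype.card V + 3)) ⊕ Bool) := {z | ∃ v, z = Sum.inl (Sum.inl v)} with hRAdef
  set RB : Set ((V ⊕ Fin (Fintype.card V + 3)) ⊕ Bool) := {z | ∃ i, z = Sum.inl (Sum.inr i)} with hRBdef
  set C : Set V := {v | Sum.inl (Sum.inl v) ∈ S} with hCdef
  have hcyc : ∀ ⦃v⦄ (p : (Gext G).Walk v v), p.IsCycle → ∃ w ∈ p.support, w ∈ S :=
    (aux_isFVS_iff _ _).mp hS.1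
  have hmin := hS.2
  -- cardinality of RA, RB
  have hAinj : Function.Injective
      (fun v : V => (Sum.inl (Sum.inl v) : (V ⊕ Fin (Fintype.card V + 3)) ⊕ Bool)) := by
    intro a b hab; simpa using hab
  have hBinj : Function.Injective
      (fun i : Fin (Fintype.card V + 3) => (Sum.inl (Sum.inr i) : (V ⊕ Fin (Fintype.card V + 3)) ⊕ Bool)) := by
    intro a b hab; simpa using hab
  have hRAcard : RA.ncard = Fintype.card V := by
    have : RA = Set.range (fun v : V => (Sum.inl (Sum.inl v) : (V ⊕ Fin (Fintype.card V + 3)) ⊕ Bool)) := by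
      ext z; simp [hRAdef, Set.mem_range, eq_comm]
    rw [this, ← Set.image_univ, Set.ncard_image_of_injective _ hAinj, Set.ncard_univ,
      Nat.card_eq_fintype_card]
  have hRBcard : RB.ncard = Fintype.card V + 3 := by
    have : RB = Set.range
        (fun i : Fin (Fintype.card V + 3) => (Sum.inl (Sum.inr i) : (V ⊕ Fin (Fintype.card V + 3)) ⊕ Bool)) := by
      ext z; simp [hRBdef, Set.mem_range, eq_comm]
    rw [this, ← Set.image_univ, Set.ncard_image_of_injective _ hBinj, Set.ncard_univ,
      Nat.card_eq_fintype_card]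
    simp
  -- size contradiction helper
  have hsize_contra : ∀ z0, ¬ (S ⊆ RA ∪ {z0}) := by
    intro z0 hsub
    have h1 : S.ncard ≤ (RA ∪ {z0}).ncard := Set.ncard_le_ncard hsub (Set.toFinite _)
    have h2 : (RA ∪ {z0}).ncard ≤ RA.ncard + ({z0} : Set _).ncard := Set.ncard_union_le _ _
    rw [hRAcard, Set.ncard_singleton] at h2
    omega
  -- Step 1: x ∉ S
  have hX : (Sum.inr false : (V ⊕ Fin (Fintype.card V + 3)) ⊕ Bool) ∉ S := by
    intro hXS
    by_cases hcase : ∀ z ∈ S, z ∈ RA ∪ {Sum.inr false}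
    · exact hsize_contra _ hcase
    push_neg at hcase
    obtain ⟨d, hdS, hdD⟩ := hcase
    set T := S \ (RB ∪ {Sum.inr true}) with hTdef
    have hdRB : d ∈ RB ∪ {Sum.inr true} := by
      rcases d with (v | i) | (_ | _)
      · exact absurd (Or.inl ⟨v, rfl⟩) hdD
      · exact Or.inl ⟨i, rfl⟩
      · exact absurd (Or.inr rfl) hdD
      · exact Or.inr rfl
    have hTsub : T ⊂ S := by
      rw [Set.ssubset_def]
      refine ⟨Set.diff_subset, fun h => ?_⟩
      have := h hdS
      rw [hTdef] at this
      exact this.2 hdRB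
    refine hmin T hTsub ?_
    rw [aux_isFVS_iff]
    intro v p hp
    by_contra hno
    push_neg at hno
    have hXT : (Sum.inr false : (V ⊕ Fin (Fintype.card V + 3)) ⊕ Bool) ∈ T := by
      refine ⟨hXS, ?_⟩
      rintro (⟨i, h⟩ | h) <;> simp_all
    have hXsup : (Sum.inr false : (V ⊕ Fin (Fintype.card V + 3)) ⊕ Bool) ∉ p.support :=
      fun h => hno _ h hXT
    have hBsup : ∀ i : Fin (Fintype.card V + 3), Sum.inl (Sum.inr i) ∉ p.support := by
      intro i hin
      obtain ⟨u₁, u₂, hne, hm₁, hm₂, ha₁, ha₂⟩ := aux_exists_two_neighbors hp hin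
      have e₁ := gext_nbr_B ha₁
      have e₂ := gext_nbr_B ha₂
      rcases e₁ with rfl | rfl
      · exact hXsup hm₁
      rcases e₂ with rfl | rfl
      · exact hXsup hm₂
      exact hne rfl
    have hYsup : (Sum.inr true : (V ⊕ Fin (Fintype.card V + 3)) ⊕ Bool) ∉ p.support := by
      intro hin
      obtain ⟨u₁, u₂, hne, hm₁, hm₂, ha₁, ha₂⟩ := aux_exists_two_neighbors hp hin
      obtain ⟨i, rfl⟩ := gext_nbr_Y ha₁
      exact hBsup i hm₁
    obtain ⟨w, hwsup, hwS⟩ := hcyc p hp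
    have hwT : w ∉ T := hno w hwsup
    rw [hTdef] at hwT
    have : w ∈ RB ∪ {Sum.inr true} := by
      by_contra hc
      exact hwT ⟨hwS, hc⟩
    rcases this with ⟨i, rfl⟩ | rfl
    · exact hBsup i hwsup
    · exact hYsup hwsup
  -- Step 2: y ∉ S
  have hY : (Sum.inr true : (V ⊕ Fin (Fintype.card V + 3)) ⊕ Bool) ∉ S := by
    intro hYS
    by_cases hcase : ∃ i : Fin (Fintype.card V + 3), Sum.inl (Sum.inr i) ∈ S
    · obtain ⟨i, hiS⟩ := hcase
      set T := S \ {Sum.inl (Sum.inr i)} with hTdef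
      have hTsub : T ⊂ S := by
        rw [Set.ssubset_def]
        refine ⟨Set.diff_subset, fun h => ?_⟩
        exact (h hiS).2 rfl
      refine hmin T hTsub ?_
      rw [aux_isFVS_iff]
      intro v p hp
      by_contra hno
      push_neg at hno
      have hYsup : (Sum.inr true : (V ⊕ Fin (Fintype.card V + 3)) ⊕ Bool) ∉ p.support := by
        intro h
        exact hno _ h ⟨hYS, by simp⟩
      have hBisup : Sum.inl (Sum.inr i) ∉ p.support := by
        intro hin
        obtain ⟨u₁, u₂, hne, hm₁, hm₂, ha₁, ha₂⟩ := aux_exists_two_neighbors hp hin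
        rcases gext_nbr_B ha₁ with rfl | rfl
        · rcases gext_nbr_B ha₂ with rfl | rfl
          · exact hne rfl
          · exact hYsup hm₂
        · exact hYsup hm₁
      obtain ⟨w, hwsup, hwS⟩ := hcyc p hp
      have hwT : w ∉ T := hno w hwsup
      rw [hTdef] at hwT
      have : w = Sum.inl (Sum.inr i) := by
        by_contra hc
        exact hwT ⟨hwS, hc⟩
      exact hBisup (this ▸ hwsup)
    · push_neg at hcase
      refine hsize_contra (Sum.inr true) ?_
      intro z hz
      rcases z with (v | i) | (_ | _)
      · exact Or.inl ⟨v, rfl⟩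
      · exact absurd hz (hcase i)
      · exact absurd hz hX
      · exact Or.inr rfl
  -- Step 3: at most one missing B vertex
  have hmiss : ∀ i j : Fin (Fintype.card V + 3), Sum.inl (Sum.inr i) ∉ S → Sum.inl (Sum.inr j) ∉ S →
      i = j := by
    intro i j hi hj
    by_contra hij
    have hBij : (Sum.inl (Sum.inr i) : (V ⊕ Fin (Fintype.card V + 3)) ⊕ Bool) ≠ Sum.inl (Sum.inr j) := by
      simp [hij]
    have hcycle := aux_square_isCycle (gext_adj_X_inl (G := G) (Sum.inr i))
      (gext_adj_Y_B (G := G) i).symm (gext_adj_Y_B (G := G) j)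
      ((gext_adj_X_inl (G := G) (Sum.inr j)).symm) (by simp) hBij
    obtain ⟨w, hwsup, hwS⟩ := hcyc _ hcycle
    simp only [Walk.support_cons, Walk.support_nil, List.mem_cons] at hwsup
    rcases hwsup with rfl | rfl | rfl | rfl | (rfl | h)
    · exact hX hwS
    · exact hi hwS
    · exact hY hwS
    · exact hj hwS
    · exact hX hwS
    · simp at h
  -- Step 4: at least one missing B vertex
  have hexists : ∃ i : Fin (Fintype.card V + 3), Sum.inl (Sum.inr i) ∉ S := by
    by_contra hall
    push_neg at hall
    set i₀ : Fin (Fintype.card V + 3) := ⟨0, by omega⟩ with hi₀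
    set T := S \ {Sum.inl (Sum.inr i₀)} with hTdef
    have hTsub : T ⊂ S := by
      rw [Set.ssubset_def]
      refine ⟨Set.diff_subset, fun h => ?_⟩
      exact (h (hall i₀)).2 rfl
    refine hmin T hTsub ?_
    rw [aux_isFVS_iff]
    intro v p hp
    by_contra hno
    push_neg at hno
    have hYsup : (Sum.inr true : (V ⊕ Fin (Fintype.card V + 3)) ⊕ Bool) ∉ p.support := by
      intro hin
      obtain ⟨u₁, u₂, hne, hm₁, hm₂, ha₁, ha₂⟩ := aux_exists_two_neighbors hp hin
      obtain ⟨i, rfl⟩ := gext_nbr_Y ha₁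
      obtain ⟨j, rfl⟩ := gext_nbr_Y ha₂
      have h₁ : i = i₀ := by
        by_contra hc
        exact hno _ hm₁ ⟨hall i, by simp [hc]⟩
      have h₂ : j = i₀ := by
        by_contra hc
        exact hno _ hm₂ ⟨hall j, by simp [hc]⟩
      exact hne (by rw [h₁, h₂])
    have hBsup : ∀ i : Fin (Fintype.card V + 3), Sum.inl (Sum.inr i) ∉ p.support := by
      intro i hin
      by_cases hii : i = i₀
      · subst hii
        obtain ⟨u₁, u₂, hne, hm₁, hm₂, ha₁, ha₂⟩ := aux_exists_two_neighbors hp hin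
        rcases gext_nbr_B ha₁ with rfl | rfl
        · rcases gext_nbr_B ha₂ with rfl | rfl
          · exact hne rfl
          · exact hYsup hm₂
        · exact hYsup hm₁
      · exact hno _ hin ⟨hall i, by simp [hii]⟩
    obtain ⟨w, hwsup, hwS⟩ := hcyc p hp
    have hwT : w ∉ T := hno w hwsup
    rw [hTdef] at hwT
    have : w = Sum.inl (Sum.inr i₀) := by
      by_contra hc
      exact hwT ⟨hwS, hc⟩
    exact hBsup i₀ (this ▸ hwsup)
  obtain ⟨i₀, hi₀S⟩ := hexists
  -- Step 5: B-count
  have hSB : S ∩ RB = RB \ {Sum.inl (Sum.inr i₀)} := by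
    ext z
    constructor
    · rintro ⟨hzS, hzB⟩
      refine ⟨hzB, ?_⟩
      rintro rfl
      exact hi₀S hzS
    · rintro ⟨⟨i, rfl⟩, hzne⟩
      refine ⟨?_, ⟨i, rfl⟩⟩
      by_contra hc
      exact hzne (by rw [hmiss i i₀ hc hi₀S]; rfl)
  have hSBcard : (S ∩ RB).ncard = Fintype.card V + 2 := by
    rw [hSB, Set.ncard_diff_singleton_of_mem
      (show (Sum.inl (Sum.inr i₀) : (V ⊕ Fin (Fintype.card V + 3)) ⊕ Bool) ∈ RB from ⟨i₀, rfl⟩),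
      hRBcard]
    omega
  -- Step 6: vertex cover
  have hVC : _root_.IsVertexCover G C := by
    intro u w huw
    by_contra hc
    push_neg at hc
    have hu : Sum.inl (Sum.inl u) ∉ S := hc.1
    have hw : Sum.inl (Sum.inl w) ∉ S := hc.2
    have hcycle := aux_triangle_isCycle (gext_adj_X_inl (G := G) (Sum.inl u))
      (gext_adj_A_A huw) ((gext_adj_X_inl (G := G) (Sum.inl w)).symm)
    obtain ⟨z, hzsup, hzS⟩ := hcyc _ hcycle
    simp only [Walk.support_cons, Walk.support_nil, List.mem_cons] at hzsup
    rcases hzsup with rfl | rfl | rfl | (rfl | h)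
    · exact hX hzS
    · exact hu hzS
    · exact hw hzS
    · exact hX hzS
    · simp at h
  -- Step 7: minimal vertex cover
  have hminVC : ∀ T : Set V, T ⊂ C → ¬ _root_.IsVertexCover G T := by
    intro T hTsub hTvc
    obtain ⟨v0, hv0C, hv0T⟩ := Set.exists_of_ssubset hTsub
    set S' : Set ((V ⊕ Fin (Fintype.card V + 3)) ⊕ Bool) :=
      {z | z ∈ S ∧ ∀ u : V, z = Sum.inl (Sum.inl u) → u ∈ T} with hS'def
    have hS'sub : S' ⊂ S := by
      rw [Set.ssubset_def]
      refine ⟨fun z hz => hz.1, fun h => ?_⟩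
      have := h hv0C
      exact hv0T (this.2 v0 rfl)
    refine hmin S' hS'sub ?_
    rw [aux_isFVS_iff]
    intro v p hp
    by_contra hno
    push_neg at hno
    -- B vertices other than i₀ are in S'
    have hBS' : ∀ i : Fin (Fintype.card V + 3), i ≠ i₀ → Sum.inl (Sum.inr i) ∈ S' := by
      intro i hi
      refine ⟨?_, by simp⟩
      by_contra hc
      exact hi (hmiss i i₀ hc hi₀S)
    have hYsup : (Sum.inr true : (V ⊕ Fin (Fintype.card V + 3)) ⊕ Bool) ∉ p.support := by
      intro hin
      obtain ⟨u₁, u₂, hne, hm₁, hm₂, ha₁, ha₂⟩ := aux_exists_two_neighbors hp hin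
      obtain ⟨i, rfl⟩ := gext_nbr_Y ha₁
      obtain ⟨j, rfl⟩ := gext_nbr_Y ha₂
      have h₁ : i = i₀ := by
        by_contra hc
        exact hno _ hm₁ (hBS' i hc)
      have h₂ : j = i₀ := by
        by_contra hc
        exact hno _ hm₂ (hBS' j hc)
      exact hne (by rw [h₁, h₂])
    have hBsup : ∀ i : Fin (Fintype.card V + 3), Sum.inl (Sum.inr i) ∉ p.support := by
      intro i hin
      by_cases hii : i = i₀
      · subst hii
        obtain ⟨u₁, u₂, hne, hm₁, hm₂, ha₁, ha₂⟩ := aux_exists_two_neighbors hp hin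
        rcases gext_nbr_B ha₁ with rfl | rfl
        · rcases gext_nbr_B ha₂ with rfl | rfl
          · exact hne rfl
          · exact hYsup hm₂
        · exact hYsup hm₁
      · exact hno _ hin (hBS' i hii)
    -- A vertices on the support have index outside T
    have hnotT : ∀ u : V, Sum.inl (Sum.inl u) ∈ p.support → u ∉ T := by
      intro u hu huT
      refine hno _ hu ⟨hTsub.1 huT, ?_⟩
      intro u' hu'
      have : u = u' := by simpa using hu'
      exact this ▸ huT
    have hAsup : ∀ u : V, Sum.inl (Sum.inl u) ∉ p.support := by
      intro u hin
      obtain ⟨u₁, u₂, hne, hm₁, hm₂, ha₁, ha₂⟩ := aux_exists_two_neighbors hp hin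
      have hclass : ∀ z, z ∈ p.support → (Gext G).Adj (Sum.inl (Sum.inl u)) z →
          z = Sum.inr false := by
        intro z hzsup hadj
        rcases gext_nbr_A hadj with rfl | ⟨w, rfl, hGadj⟩
        · rfl
        · have hwT := hnotT w hzsup
          have huT := hnotT u hin
          rcases hTvc hGadj with h | h
          · exact absurd h huT
          · exact absurd h hwT
      have e₁ := hclass u₁ hm₁ ha₁
      have e₂ := hclass u₂ hm₂ ha₂
      exact hne (e₁.trans e₂.symm)
    obtain ⟨w, hwsup, hwS⟩ := hcyc p hp
    rcases w with (u | i) | (_ | _)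
    · exact hAsup u hwsup
    · exact hBsup i hwsup
    · exact hX hwS
    · exact hY hwS
  -- Step 8: cardinalities
  have hCA : S ∩ RA = (fun v : V => (Sum.inl (Sum.inl v) : (V ⊕ Fin (Fintype.card V + 3)) ⊕ Bool)) '' C := by
    ext z
    constructor
    · rintro ⟨hzS, ⟨v, rfl⟩⟩
      exact ⟨v, hzS, rfl⟩
    · rintro ⟨v, hvC, rfl⟩
      exact ⟨hvC, ⟨v, rfl⟩⟩
  have hCAcard : (S ∩ RA).ncard = C.ncard := by
    rw [hCA, Set.ncard_image_of_injective _ hAinj]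
  have hSplit : S = (S ∩ RA) ∪ (S ∩ RB) := by
    ext z
    constructor
    · intro hz
      rcases z with (u | i) | (_ | _)
      · exact Or.inl ⟨hz, ⟨u, rfl⟩⟩
      · exact Or.inr ⟨hz, ⟨i, rfl⟩⟩
      · exact absurd hz hX
      · exact absurd hz hY
    · rintro (⟨h, _⟩ | ⟨h, _⟩) <;> exact h
  have hdisj : Disjoint (S ∩ RA) (S ∩ RB) := by
    rw [Set.disjoint_left]
    rintro z ⟨_, ⟨v, rfl⟩⟩ ⟨_, ⟨i, hi⟩⟩
    simp at hi
  have hScard : S.ncard = C.ncard + (Fintype.card V + 2) := by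
    rw [hSplit, Set.ncard_union_eq hdisj (Set.toFinite _) (Set.toFinite _), hCAcard, hSBcard]
  refine ⟨hX, hY, hSBcard, ⟨hVC, hminVC⟩, ?_⟩
  rw [hScard] at hsize
  omega
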